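/- Let T ⊆ ℝ be closed, let ρ(x) = sup{y ∈ T : y < x} and σ(x) = inf{y ∈ T : y > x}, and let μ = 1_T·m + Σ_{x ∈ T not two-sided dense} ((σ(x)−ρ(x))/2) δ_x where m is Lebesgue measure. Then for any u, v ∈ T with u < v: ∫_{(u,v)} μ(da) = (v − u) − (σ(u)−u)/2 − (v−ρ(v))/2. -/
import Mathlib

open MeasureTheory Set
open scoped ENNReal

/-- `ρ(x) = sup{y ∈ T : y < x}`. -/
noncomputable def leftNbr (T : Set ℝ) (x : ℝ) : ℝ := sSup {y ∈ T | y < x}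

/-- `σ(x) = inf{y ∈ T : y > x}`. -/
noncomputable def rightNbr (T : Set ℝ) (x : ℝ) : ℝ := sInf {y ∈ T | x < y}

/-- The speed measure `μ = 1_T · m + Σ_{x ∈ T not two-sided dense} ((σ(x)-ρ(x))/2) δ_x`. -/
noncomputable def speedMeasure (T : Set ℝ) : Measure ℝ :=
  volume.restrict T +
    Measure.sum (fun x : {x : ℝ // x ∈ T ∧ (leftNbr T x ≠ x ∨ rightNbr T x ≠ x)} =>
      ENNReal.ofReal ((rightNbr T x - leftNbr T x) / 2) • Measure.dirac (x : ℝ))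

section Aux

variable {T : Set ℝ} {u v x t : ℝ}

lemma rightNbr_bddBelow (T : Set ℝ) (x : ℝ) : BddBelow {y ∈ T | x < y} :=
  ⟨x, fun y hy => hy.2.le⟩

lemma leftNbr_bddAbove (T : Set ℝ) (x : ℝ) : BddAbove {y ∈ T | y < x} :=
  ⟨x, fun y hy => hy.2.le⟩

lemma rightNbr_le (ht : t ∈ T) (hxt : x < t) : rightNbr T x ≤ t :=
  csInf_le (rightNbr_bddBelow T x) ⟨ht, hxt⟩

lemma le_leftNbr (ht : t ∈ T) (htx : t < x) : t ≤ leftNbr T x :=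
  le_csSup (leftNbr_bddAbove T x) ⟨ht, htx⟩

lemma le_rightNbr (hv : v ∈ T) (hxv : x < v) : x ≤ rightNbr T x :=
  le_csInf ⟨v, hv, hxv⟩ fun _ hy => hy.2.le

lemma leftNbr_le (hu : u ∈ T) (hux : u < x) : leftNbr T x ≤ x :=
  csSup_le ⟨u, hu, hux⟩ fun _ hy => hy.2.le

lemma rightNbr_mem (hT : IsClosed T) (hv : v ∈ T) (hxv : x < v) : rightNbr T x ∈ T := by
  have h := csInf_mem_closure (⟨v, hv, hxv⟩ : {y ∈ T | x < y}.Nonempty) (rightNbr_bddBelow T x)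
  exact hT.closure_subset_iff.mpr (fun y hy => hy.1) h

lemma leftNbr_mem (hT : IsClosed T) (hu : u ∈ T) (hux : u < x) : leftNbr T x ∈ T := by
  have h := csSup_mem_closure (⟨u, hu, hux⟩ : {y ∈ T | y < x}.Nonempty) (leftNbr_bddAbove T x)
  exact hT.closure_subset_iff.mpr (fun y hy => hy.1) h

lemma notMem_Ioo_rightNbr (ht : t ∈ T) : t ∉ Ioo x (rightNbr T x) :=
  fun h => absurd (rightNbr_le ht h.1) (not_le.mpr h.2)

lemma notMem_Ioo_leftNbr (ht : t ∈ T) : t ∉ Ioo (leftNbr T x) x :=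
  fun h => absurd (le_leftNbr ht h.2) (not_le.mpr h.1)

/-- The union of the right-gaps of points of `T ∩ (u,v)`. -/
lemma biUnion_rightGaps (hT : IsClosed T) (hu : u ∈ T) (hv : v ∈ T) (huv : u < v) :
    ⋃ x ∈ {x | x ∈ T ∧ x ∈ Ioo u v ∧ x < rightNbr T x}, Ioo x (rightNbr T x)
      = Ioo (rightNbr T u) v \ T := by
  ext y
  simp only [mem_iUnion, mem_setOf_eq, exists_prop]
  constructor
  · rintro ⟨x, ⟨hxT, hxI, _⟩, hy1, hy2⟩
    refine ⟨⟨lt_of_le_of_lt (rightNbr_le hxT hxI.1) hy1,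
      lt_of_lt_of_le hy2 (rightNbr_le hv hxI.2)⟩, fun hyT => notMem_Ioo_rightNbr hyT ⟨hy1, hy2⟩⟩
  · rintro ⟨⟨hy1, hy2⟩, hyT⟩
    set a := leftNbr T y with ha
    have hσuT : rightNbr T u ∈ T := rightNbr_mem hT hv huv
    have haT : a ∈ T := leftNbr_mem hT hσuT hy1
    have hay : a < y :=
      lt_of_le_of_ne (leftNbr_le hσuT hy1) (fun h => hyT (h ▸ haT))
    have hua : u < a := by
      obtain ⟨t, ⟨htT, hut⟩, hty⟩ :=
        exists_lt_of_csInf_lt (⟨v, hv, huv⟩ : {y ∈ T | u < y}.Nonempty) hy1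
      exact lt_of_lt_of_le hut (le_leftNbr htT hty)
    have hyσa : y < rightNbr T a := by
      have hle : y ≤ rightNbr T a := by
        refine le_csInf ⟨v, hv, lt_trans hay hy2⟩ (fun t ht => ?_)
        by_contra hc
        exact absurd (le_leftNbr ht.1 (not_le.mp hc)) (not_le.mpr ht.2)
      exact lt_of_le_of_ne hle
        (fun h => hyT (h ▸ rightNbr_mem hT hv (lt_trans hay hy2)))
    exact ⟨a, ⟨haT, ⟨hua, lt_trans hay hy2⟩, lt_trans hay hyσa⟩, hay, hyσa⟩

/-- The union of the left-gaps of points of `T ∩ (u,v)`. -/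
lemma biUnion_leftGaps (hT : IsClosed T) (hu : u ∈ T) (hv : v ∈ T) (huv : u < v) :
    ⋃ x ∈ {x | x ∈ T ∧ x ∈ Ioo u v ∧ leftNbr T x < x}, Ioo (leftNbr T x) x
      = Ioo u (leftNbr T v) \ T := by
  ext y
  simp only [mem_iUnion, mem_setOf_eq, exists_prop]
  constructor
  · rintro ⟨x, ⟨hxT, hxI, _⟩, hy1, hy2⟩
    refine ⟨⟨lt_of_le_of_lt (le_leftNbr hu hxI.1) hy1,
      lt_of_lt_of_le hy2 (le_leftNbr hxT hxI.2)⟩, fun hyT => notMem_Ioo_leftNbr hyT ⟨hy1, hy2⟩⟩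
  · rintro ⟨⟨hy1, hy2⟩, hyT⟩
    set b := rightNbr T y with hb
    have hρvT : leftNbr T v ∈ T := leftNbr_mem hT hu huv
    have hbT : b ∈ T := rightNbr_mem hT hρvT hy2
    have hyb : y < b :=
      lt_of_le_of_ne (le_rightNbr hρvT hy2) (fun h => hyT (h ▸ hbT))
    have hbv : b < v := by
      obtain ⟨t, ⟨htT, htv⟩, hyt⟩ :=
        exists_lt_of_lt_csSup (⟨u, hu, huv⟩ : {y ∈ T | y < v}.Nonempty) hy2
      exact lt_of_le_of_lt (rightNbr_le htT hyt) htv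
    have hρby : leftNbr T b < y := by
      have hle : leftNbr T b ≤ y := by
        refine csSup_le ⟨u, hu, lt_trans hy1 hyb⟩ (fun t ht => ?_)
        by_contra hc
        exact absurd (rightNbr_le ht.1 (not_le.mp hc)) (not_le.mpr ht.2)
      exact lt_of_le_of_ne hle (fun h => hyT (h ▸ leftNbr_mem hT hu (lt_trans hy1 hyb)))
    exact ⟨b, ⟨hbT, ⟨lt_trans hy1 hyb, hbv⟩, lt_trans hρby hyb⟩, hρby, hyb⟩

lemma pairwise_rightGaps :
    ({x | x ∈ T ∧ x ∈ Ioo u v ∧ x < rightNbr T x}).PairwiseDisjoint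
      (fun x => Ioo x (rightNbr T x)) := by
  intro x hx y hy hxy
  rcases hxy.lt_or_gt with h | h
  · have hxy' : rightNbr T x ≤ y := rightNbr_le hy.1 h
    exact Set.disjoint_left.mpr fun z hz hz' =>
      absurd ((hz.2.trans_le hxy').trans hz'.1) (lt_irrefl z)
  · have hxy' : rightNbr T y ≤ x := rightNbr_le hx.1 h
    exact Set.disjoint_left.mpr fun z hz hz' =>
      absurd ((hz'.2.trans_le hxy').trans hz.1) (lt_irrefl z)

lemma pairwise_leftGaps :
    ({x | x ∈ T ∧ x ∈ Ioo u v ∧ leftNbr T x < x}).PairwiseDisjoint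
      (fun x => Ioo (leftNbr T x) x) := by
  intro x hx y hy hxy
  rcases hxy.lt_or_gt with h | h
  · have hxy' : x ≤ leftNbr T y := le_leftNbr hx.1 h
    exact Set.disjoint_left.mpr fun z hz hz' =>
      absurd ((hz.2.trans_le hxy').trans hz'.1) (lt_irrefl z)
  · have hxy' : y ≤ leftNbr T x := le_leftNbr hy.1 h
    exact Set.disjoint_left.mpr fun z hz hz' =>
      absurd ((hz'.2.trans_le hxy').trans hz.1) (lt_irrefl z)

lemma ofReal_half (p : ℝ) : ENNReal.ofReal (p / 2) = ENNReal.ofReal p / 2 := by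
  rw [ENNReal.ofReal_div_of_pos two_pos]
  norm_num

end Aux

/-- for `u, v ∈ T` with `u < v`,
`∫_{(u,v)} μ(da) = (v-u) - (σ(u)-u)/2 - (v-ρ(v))/2`. -/
theorem speedMeasure_Ioo (T : Set ℝ) (hT : IsClosed T) (u v : ℝ) (hu : u ∈ T) (hv : v ∈ T)
    (huv : u < v) :
    speedMeasure T (Set.Ioo u v)
      = ENNReal.ofReal ((v - u) - (rightNbr T u - u) / 2 - (v - leftNbr T v) / 2) := by
  classical
  have hσu_le : rightNbr T u ≤ v := rightNbr_le hv huv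
  have hσu_ge : u ≤ rightNbr T u := le_rightNbr hv huv
  have hρv_le : leftNbr T v ≤ v := leftNbr_le hu huv
  have hρv_ge : u ≤ leftNbr T v := le_leftNbr hu huv
  set a : ℝ≥0∞ := volume (Ioo u v ∩ T) with ha
  set R : ℝ≥0∞ := volume (Ioo (rightNbr T u) v \ T) with hRdef
  set L : ℝ≥0∞ := volume (Ioo u (leftNbr T v) \ T) with hLdef
  -- the two inner measures coincide with `a`
  have hRa : volume (Ioo (rightNbr T u) v ∩ T) = a := by
    refine le_antisymm (measure_mono (inter_subset_inter_left _ (Ioo_subset_Ioo hσu_ge le_rfl))) ?_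
    calc a ≤ volume ((Ioo (rightNbr T u) v ∩ T) ∪ {rightNbr T u}) := by
            refine measure_mono (fun y hy => ?_)
            rcases eq_or_lt_of_le (rightNbr_le hy.2 hy.1.1) with h | h
            · exact Or.inr h.symm
            · exact Or.inl ⟨⟨h, hy.1.2⟩, hy.2⟩
      _ ≤ volume (Ioo (rightNbr T u) v ∩ T) + volume ({rightNbr T u} : Set ℝ) :=
            measure_union_le _ _
      _ = volume (Ioo (rightNbr T u) v ∩ T) := by rw [Real.volume_singleton, add_zero]
  have hLa : volume (Ioo u (leftNbr T v) ∩ T) = a := by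
    refine le_antisymm (measure_mono (inter_subset_inter_left _ (Ioo_subset_Ioo le_rfl hρv_le))) ?_
    calc a ≤ volume ((Ioo u (leftNbr T v) ∩ T) ∪ {leftNbr T v}) := by
            refine measure_mono (fun y hy => ?_)
            rcases eq_or_lt_of_le (le_leftNbr hy.2 hy.1.2) with h | h
            · exact Or.inr h
            · exact Or.inl ⟨⟨hy.1.1, h⟩, hy.2⟩
      _ ≤ volume (Ioo u (leftNbr T v) ∩ T) + volume ({leftNbr T v} : Set ℝ) :=
            measure_union_le _ _
      _ = volume (Ioo u (leftNbr T v) ∩ T) := by rw [Real.volume_singleton, add_zero]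
  have hR : a + R = ENNReal.ofReal (v - rightNbr T u) := by
    rw [← hRa, hRdef, measure_inter_add_diff _ hT.measurableSet, Real.volume_Ioo]
  have hL : a + L = ENNReal.ofReal (leftNbr T v - u) := by
    rw [← hLa, hLdef, measure_inter_add_diff _ hT.measurableSet, Real.volume_Ioo]
  -- compute the atomic part
  set P : Set ℝ := {x | x ∈ T ∧ (leftNbr T x ≠ x ∨ rightNbr T x ≠ x)} with hP
  set w : ℝ → ℝ≥0∞ := fun x => ENNReal.ofReal ((rightNbr T x - leftNbr T x) / 2) with hw
  set B : Set ℝ := T ∩ Ioo u v with hB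
  have key : (Measure.sum (fun x : {x : ℝ // x ∈ T ∧ (leftNbr T x ≠ x ∨ rightNbr T x ≠ x)} =>
      ENNReal.ofReal ((rightNbr T x - leftNbr T x) / 2) • Measure.dirac (x : ℝ)))
        (Set.Ioo u v) = R / 2 + L / 2 := by
    rw [Measure.sum_apply _ measurableSet_Ioo]
    have step1 : ∀ x : {x : ℝ // x ∈ T ∧ (leftNbr T x ≠ x ∨ rightNbr T x ≠ x)},
        (ENNReal.ofReal ((rightNbr T ↑x - leftNbr T ↑x) / 2) • Measure.dirac (x : ℝ))
          (Set.Ioo u v) = (Ioo u v).indicator w ↑x := by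
      intro x
      rw [Measure.smul_apply, Measure.dirac_apply' _ measurableSet_Ioo]
      by_cases hx : (x : ℝ) ∈ Ioo u v
      · simp [hx, hw]
      · simp [hx]
    rw [tsum_congr step1]
    have step2 : ∑' x : {x : ℝ // x ∈ T ∧ (leftNbr T x ≠ x ∨ rightNbr T x ≠ x)},
        (Ioo u v).indicator w ↑x = ∑' x : ℝ, (P ∩ Ioo u v).indicator w x := by
      rw [← Set.indicator_indicator]
      exact tsum_subtype P ((Ioo u v).indicator w)
    rw [step2]
    set g : ℝ → ℝ≥0∞ := fun x => ENNReal.ofReal ((rightNbr T x - x) / 2)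
      + ENNReal.ofReal ((x - leftNbr T x) / 2) with hg
    have step3 : (P ∩ Ioo u v).indicator w = B.indicator g := by
      funext x
      by_cases hxB : x ∈ B
      · have hx1 : x ≤ rightNbr T x := le_rightNbr hv hxB.2.2
        have hx2 : leftNbr T x ≤ x := leftNbr_le hu hxB.2.1
        by_cases hxP : leftNbr T x ≠ x ∨ rightNbr T x ≠ x
        · have hmem : x ∈ P ∩ Ioo u v := ⟨⟨hxB.1, hxP⟩, hxB.2⟩
          rw [Set.indicator_of_mem hmem, Set.indicator_of_mem hxB, hw, hg]
          have : (rightNbr T x - leftNbr T x) / 2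
              = (rightNbr T x - x) / 2 + (x - leftNbr T x) / 2 := by ring
          dsimp only
          rw [this, ENNReal.ofReal_add (by linarith) (by linarith)]
        · push_neg at hxP
          have hnot : x ∉ P ∩ Ioo u v := fun h => h.1.2.elim
            (fun h' => h' hxP.1) (fun h' => h' hxP.2)
          rw [Set.indicator_of_mem hxB, Set.indicator_of_notMem hnot, hg]
          simp [hxP.1, hxP.2]
      · have hnot : x ∉ P ∩ Ioo u v := fun h => hxB ⟨h.1.1, h.2⟩
        rw [Set.indicator_of_notMem hnot, Set.indicator_of_notMem hxB]
    rw [step3, ← tsum_subtype B g, hg]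
    rw [ENNReal.tsum_add]
    have Rpart : ∑' x : ↥B, ENNReal.ofReal ((rightNbr T ↑x - ↑x) / 2) = R / 2 := by
      have h1 : ∀ x : ↥B, ENNReal.ofReal ((rightNbr T ↑x - ↑x) / 2)
          = volume (Ioo (↑x : ℝ) (rightNbr T ↑x)) / 2 := by
        intro x; rw [Real.volume_Ioo, ofReal_half]
      rw [tsum_congr h1]
      simp_rw [div_eq_mul_inv]
      rw [ENNReal.tsum_mul_right]
      congr 1
      set B' : Set ℝ := {x | x ∈ T ∧ x ∈ Ioo u v ∧ x < rightNbr T x} with hB'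
      have hBB' : ∑' x : ↥B, volume (Ioo (↑x : ℝ) (rightNbr T ↑x))
          = ∑' x : ↥B', volume (Ioo (↑x : ℝ) (rightNbr T ↑x)) := by
        rw [tsum_subtype B (fun x => volume (Ioo x (rightNbr T x))),
          tsum_subtype B' (fun x => volume (Ioo x (rightNbr T x)))]
        congr 1
        funext x
        by_cases hx' : x ∈ B'
        · have hxB : x ∈ B := ⟨hx'.1, hx'.2.1⟩
          rw [Set.indicator_of_mem hx', Set.indicator_of_mem hxB]
        · by_cases hxB : x ∈ B
          · have : rightNbr T x ≤ x := by
              by_contra hc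
              exact hx' ⟨hxB.1, hxB.2, not_le.mp hc⟩
            rw [Set.indicator_of_notMem hx', Set.indicator_of_mem hxB, Ioo_eq_empty (not_lt.mpr this)]
            simp
          · rw [Set.indicator_of_notMem hx', Set.indicator_of_notMem hxB]
      rw [hBB']
      have hcnt : B'.Countable :=
        pairwise_rightGaps.countable_of_isOpen (fun x _ => isOpen_Ioo)
          (fun x hx => nonempty_Ioo.mpr hx.2.2)
      rw [← measure_biUnion hcnt pairwise_rightGaps (fun b _ => measurableSet_Ioo)]
      rw [biUnion_rightGaps hT hu hv huv]
    have Lpart : ∑' x : ↥B, ENNReal.ofReal ((↑x - leftNbr T ↑x) / 2) = L / 2 := by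
      have h1 : ∀ x : ↥B, ENNReal.ofReal ((↑x - leftNbr T ↑x) / 2)
          = volume (Ioo (leftNbr T ↑x) (↑x : ℝ)) / 2 := by
        intro x; rw [Real.volume_Ioo, ofReal_half]
      rw [tsum_congr h1]
      simp_rw [div_eq_mul_inv]
      rw [ENNReal.tsum_mul_right]
      congr 1
      set B' : Set ℝ := {x | x ∈ T ∧ x ∈ Ioo u v ∧ leftNbr T x < x} with hB'
      have hBB' : ∑' x : ↥B, volume (Ioo (leftNbr T ↑x) (↑x : ℝ))
          = ∑' x : ↥B', volume (Ioo (leftNbr T ↑x) (↑x : ℝ)) := by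
        rw [tsum_subtype B (fun x => volume (Ioo (leftNbr T x) x)),
          tsum_subtype B' (fun x => volume (Ioo (leftNbr T x) x))]
        congr 1
        funext x
        by_cases hx' : x ∈ B'
        · have hxB : x ∈ B := ⟨hx'.1, hx'.2.1⟩
          rw [Set.indicator_of_mem hx', Set.indicator_of_mem hxB]
        · by_cases hxB : x ∈ B
          · have : x ≤ leftNbr T x := by
              by_contra hc
              exact hx' ⟨hxB.1, hxB.2, not_le.mp hc⟩
            rw [Set.indicator_of_notMem hx', Set.indicator_of_mem hxB, Ioo_eq_empty (not_lt.mpr this)]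
            simp
          · rw [Set.indicator_of_notMem hx', Set.indicator_of_notMem hxB]
      rw [hBB']
      have hcnt : B'.Countable :=
        pairwise_leftGaps.countable_of_isOpen (fun x _ => isOpen_Ioo)
          (fun x hx => nonempty_Ioo.mpr hx.2.2)
      rw [← measure_biUnion hcnt pairwise_leftGaps (fun b _ => measurableSet_Ioo)]
      rw [biUnion_leftGaps hT hu hv huv]
    rw [Rpart, Lpart]
  -- assemble
  have lhs : speedMeasure T (Set.Ioo u v) = a + (R / 2 + L / 2) := by
    rw [speedMeasure, Measure.add_apply, key, Measure.restrict_apply measurableSet_Ioo, ha]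
  rw [lhs]
  have rhs : ENNReal.ofReal ((v - u) - (rightNbr T u - u) / 2 - (v - leftNbr T v) / 2)
      = (a + R) / 2 + (a + L) / 2 := by
    have : (v - u) - (rightNbr T u - u) / 2 - (v - leftNbr T v) / 2
        = (v - rightNbr T u) / 2 + (leftNbr T v - u) / 2 := by ring
    rw [this, ENNReal.ofReal_add (by linarith) (by linarith), ofReal_half, ofReal_half, hR, hL]
  rw [rhs, ENNReal.add_div, ENNReal.add_div]
  conv_lhs => rw [← ENNReal.add_halves a]
  ac_rfl
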